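/- The rule set R = { A(x) → ∃z p(x,z) ; p(x,z) ∧ B(y) → r(z,y) } is not parallelisable: for each n, taking I_n = {A(a), B(b_1),...,B(b_n)}, the semi-oblivious chase chase_∞(I_n, R) contains a null occurring in n+1 atoms, hence no finite rule set R' admits an injective homomorphism from chase_∞(I_n,R) into chase_1(I_n,R') for all n. -/

import Mathlib

open scoped Classical
noncomputable section

namespace ER

/-- Terms: constants or variables (variables occurring in instances are called nulls). -/
inductive Term where
  | const : ℕ → Term
  | var : ℕ → Term
deriving DecidableEq

def Term.isConst : Term → Prop
  | .const _ => True
  | .var _ => False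

/-- An atom `p(t₁,…,tₙ)`. -/
structure Atom where
  pred : ℕ
  args : List Term
deriving DecidableEq

def Atom.terms (a : Atom) : Set Term := {t | t ∈ a.args}
def Atom.vars (a : Atom) : Set ℕ := {v | Term.var v ∈ a.args}

def termsOf (S : Set Atom) : Set Term := ⋃ a ∈ S, a.terms
def varsOf (S : Set Atom) : Set ℕ := ⋃ a ∈ S, a.vars
/-- The nulls (non-constant terms) occurring in a set of atoms. -/
def nullsOf (S : Set Atom) : Set Term := {t | t ∈ termsOf S ∧ ¬ t.isConst}

def Term.subst (σ : ℕ → Term) : Term → Term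
  | .const c => .const c
  | .var v => σ v

def Atom.subst (σ : ℕ → Term) (a : Atom) : Atom := ⟨a.pred, a.args.map (Term.subst σ)⟩
def substSet (σ : ℕ → Term) (S : Set Atom) : Set Atom := (Atom.subst σ) '' S

/-- A homomorphism from `S1` to `S2`: a substitution of variables by terms mapping `S1` into `S2`. -/
def isHom (σ : ℕ → Term) (S1 S2 : Set Atom) : Prop := substSet σ S1 ⊆ S2

/-- An injective homomorphism (injective on the terms of the source). -/
def isInjHom (σ : ℕ → Term) (S1 S2 : Set Atom) : Prop :=
  isHom σ S1 S2 ∧ Set.InjOn (Term.subst σ) (termsOf S1)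

/-- An instance is a finite set of ground atoms. -/
def IsInstance (I : Set Atom) : Prop := I.Finite ∧ ∀ t ∈ termsOf I, t.isConst

/-- An existential rule, given by its body and head. -/
structure Rule where
  body : Set Atom
  head : Set Atom

def Rule.frontier (R : Rule) : Set ℕ := varsOf R.body ∩ varsOf R.head
def Rule.exist (R : Rule) : Set ℕ := varsOf R.head \ varsOf R.body

/-- Well-formed rule: finite non-empty body and head, no constants. -/
def WfRule (R : Rule) : Prop :=
  R.body.Finite ∧ R.head.Finite ∧ R.body.Nonempty ∧ R.head.Nonempty ∧
  ∀ t ∈ termsOf (R.body ∪ R.head), ¬ t.isConst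

def WfList (L : List Rule) : Prop := ∀ R ∈ L, WfRule R

/-- Restriction of a substitution to a set of variables (default value elsewhere). -/
def restrict (f : ℕ → Term) (F : Set ℕ) : ℕ → Term :=
  fun v => if v ∈ F then f v else Term.const 0

/-- A semi-oblivious naming of nulls for the rules of `L`: the null created for an
existential variable depends only on the rule and the restriction of the trigger to the
frontier, and distinct such data yield distinct nulls. -/
def SONaming (L : List Rule) (ν : Rule → (ℕ → Term) → ℕ → ℕ) : Prop :=
  (∀ R ∈ L, ∀ f g : ℕ → Term,
      restrict f R.frontier = restrict g R.frontier → ν R f = ν R g) ∧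
  (∀ R ∈ L, ∀ R' ∈ L, ∀ f f' x x', ν R f x = ν R' f' x' →
      R = R' ∧ restrict f R.frontier = restrict f' R'.frontier ∧ x = x')

/-- The safe extension of a trigger `π`, replacing each existential variable by its null. -/
def safeSub (ν : Rule → (ℕ → Term) → ℕ → ℕ) (R : Rule) (π : ℕ → Term) : ℕ → Term :=
  fun y => if y ∈ R.exist then Term.var (ν R (restrict π R.frontier) y) else π y

/-- One breadth-first semi-oblivious chase step. -/
def chaseStep (ν : Rule → (ℕ → Term) → ℕ → ℕ) (L : List Rule) (S : Set Atom) : Set Atom :=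
  S ∪ {a | ∃ R ∈ L, ∃ π : ℕ → Term, isHom π R.body S ∧ a ∈ substSet (safeSub ν R π) R.head}

/-- The breadth-first semi-oblivious chase. -/
def chaseF (ν : Rule → (ℕ → Term) → ℕ → ℕ) (L : List Rule) (I : Set Atom) : ℕ → Set Atom
  | 0 => I
  | k + 1 => chaseStep ν L (chaseF ν L I k)

def chaseInf (ν : Rule → (ℕ → Term) → ℕ → ℕ) (L : List Rule) (I : Set Atom) : Set Atom :=
  ⋃ k, chaseF ν L I k

/-- `L'` parallelises `L`. -/
def Parallelises (L' L : List Rule) : Prop :=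
  ∀ ν ν', SONaming L ν → SONaming L' ν' → ∀ I, IsInstance I →
    (∃ σ, isInjHom σ (chaseInf ν L I) (chaseF ν' L' I 1)) ∧
    (∃ σ, isHom σ (chaseF ν' L' I 1) (chaseInf ν L I))

def Parallelisable (L : List Rule) : Prop := ∃ L', WfList L' ∧ Parallelises L' L

/-- Boundedness of the semi-oblivious chase, uniformly over all instances. -/
def Bounded (L : List Rule) : Prop :=
  ∃ k, ∀ ν, SONaming L ν → ∀ I, IsInstance I → chaseF ν L I k = chaseInf ν L I

def ChaseFinite (L : List Rule) : Prop :=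
  ∀ ν, SONaming L ν → ∀ I, IsInstance I → ∃ k, chaseF ν L I k = chaseInf ν L I

/-- Two atoms are `T`-linked if they share a term of `T`. -/
def linked (T : Set Term) (a b : Atom) : Prop := ∃ t ∈ T, t ∈ a.terms ∧ t ∈ b.terms

/-- Connectivity in `S` by a path of atoms where consecutive atoms share a term of `T`. -/
def connectedIn (S : Set Atom) (T : Set Term) (a b : Atom) : Prop :=
  a ∈ S ∧ b ∈ S ∧ Relation.ReflTransGen (fun x y => x ∈ S ∧ y ∈ S ∧ linked T x y) a b

/-- `P` is closed in `S` w.r.t. `T`-linkedness. -/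
def closedIn (S : Set Atom) (T : Set Term) (P : Set Atom) : Prop :=
  ∀ a ∈ S, ∀ b ∈ P, linked T a b → a ∈ P

/-- A piece of `S` w.r.t. `T`: a non-empty subset closed under `T`-linkedness and minimal such. -/
def IsPiece (S : Set Atom) (T : Set Term) (P : Set Atom) : Prop :=
  P.Nonempty ∧ P ⊆ S ∧ closedIn S T P ∧
  ∀ P', P' ⊆ P → P'.Nonempty → closedIn S T P' → P' = P

/-- A single-piece rule: its head is a piece of itself w.r.t. its existential variables. -/
def SinglePiece (R : Rule) : Prop := IsPiece R.head (Term.var '' R.exist) R.head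

/-- The rule used at step `k` of a derivation. -/
def ruleAt (L : List Rule) (r : ℕ → ℕ) (k : ℕ) : Rule := L.getD (r k) ⟨∅, ∅⟩

/-- The set of atoms produced by the `k`-th rule application of a derivation. -/
def producedAt (ν : Rule → (ℕ → Term) → ℕ → ℕ) (L : List Rule) (r : ℕ → ℕ)
    (π : ℕ → ℕ → Term) (k : ℕ) : Set Atom :=
  substSet (safeSub ν (ruleAt L r k) (π k)) (ruleAt L r k).head

def derivState (ν : Rule → (ℕ → Term) → ℕ → ℕ) (L : List Rule) (I : Set Atom)
    (r : ℕ → ℕ) (π : ℕ → ℕ → Term) : ℕ → Set Atom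
  | 0 => I
  | k + 1 => derivState ν L I r π k ∪ producedAt ν L r π k

/-- An `R`-derivation of length `n` from `I`: each step applies a trigger. -/
def IsDeriv (ν : Rule → (ℕ → Term) → ℕ → ℕ) (L : List Rule) (I : Set Atom) (n : ℕ)
    (r : ℕ → ℕ) (π : ℕ → ℕ → Term) : Prop :=
  ∀ k < n, r k < L.length ∧ isHom (π k) (ruleAt L r k).body (derivState ν L I r π k)

/-- A pieceful derivation: each trigger maps its rule's frontier entirely into the terms of
the initial instance, or entirely into the terms produced by a single earlier application. -/
def PiecefulDeriv (ν : Rule → (ℕ → Term) → ℕ → ℕ) (L : List Rule) (I : Set Atom) (n : ℕ)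
    (r : ℕ → ℕ) (π : ℕ → ℕ → Term) : Prop :=
  ∀ k < n, (∀ x ∈ (ruleAt L r k).frontier, π k x ∈ termsOf I) ∨
    ∃ j < k, ∀ x ∈ (ruleAt L r k).frontier, π k x ∈ termsOf (producedAt ν L r π j)

/-- A pieceful rule set: every derivation from every instance is pieceful. -/
def PiecefulSet (L : List Rule) : Prop :=
  ∀ ν, SONaming L ν → ∀ I, IsInstance I → ∀ n r π,
    IsDeriv ν L I n r π → PiecefulDeriv ν L I n r π

/-- First-order structures for the semantics of rules. -/
structure Struct where
  D : Type
  nonempty : Nonempty D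
  interp : ℕ → List D → Prop
  cinterp : ℕ → D

def evalT (M : Struct) (v : ℕ → M.D) : Term → M.D
  | .const c => M.cinterp c
  | .var x => v x

def holdsA (M : Struct) (v : ℕ → M.D) (a : Atom) : Prop :=
  M.interp a.pred (a.args.map (evalT M v))

/-- Satisfaction of (the universal-existential closure of) a rule in a structure. -/
def satRule (M : Struct) (R : Rule) : Prop :=
  ∀ v : ℕ → M.D, (∀ a ∈ R.body, holdsA M v a) →
    ∃ w : ℕ → M.D, (∀ x ∈ varsOf R.body, w x = v x) ∧ ∀ a ∈ R.head, holdsA M w a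

/-- Separating variables of `S' ⊆ S`: variables occurring both in `S'` and in `S \ S'`. -/
def sepVars (S' S : Set Atom) : Set ℕ := varsOf S' ∩ varsOf (S \ S')

/-- A piece-unifier `(S', H', u)` of a set of atoms `S` with a rule `R`. -/
def IsPieceUnifier (S : Set Atom) (R : Rule) (S' H' : Set Atom) (u : ℕ → Term) : Prop :=
  Disjoint (varsOf S) (varsOf (R.body ∪ R.head)) ∧
  S'.Nonempty ∧ S' ⊆ S ∧ H' ⊆ R.head ∧
  (∀ x, x ∉ R.frontier ∪ varsOf S' → u x = Term.var x) ∧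
  (∀ x ∈ R.frontier ∪ varsOf S', ∃ y ∈ varsOf R.head, u x = Term.var y) ∧
  (∀ x ∈ R.frontier, ∃ y ∈ R.frontier, u x = Term.var y) ∧
  (∀ x ∈ sepVars S' S, ∃ y ∈ R.frontier, u x = Term.var y) ∧
  substSet u S' = substSet u H'

/-- The existential stability property of a piece-unifier of `body R2` with `R1`. -/
def StableUnifier (R2 R1 : Rule) (B2' : Set Atom) (u : ℕ → Term) : Prop :=
  (∀ x ∈ R2.frontier, u x ∉ Term.var '' R1.exist) ∨ R2.frontier ⊆ varsOf B2'

/-- The existential composition `R2 ∘_μ R1` w.r.t. a piece-unifier `μ = (B2', H1', u)`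
of `body R2` with `R1`. -/
def compose (R2 R1 : Rule) (B2' : Set Atom) (u : ℕ → Term) : Rule :=
  if ∀ x ∈ R2.frontier, u x ∉ Term.var '' R1.exist then
    ⟨substSet u R1.body ∪ substSet u (R2.body \ B2'), substSet u R2.head⟩
  else
    ⟨substSet u R1.body ∪ substSet u (R2.body \ B2'),
     substSet u R1.head ∪ substSet u R2.head⟩

/-- The closure `R*` of a rule set under existential composition. -/
inductive InClosure (𝒮 : Set Rule) : Rule → Prop
  | base {R : Rule} : R ∈ 𝒮 → InClosure 𝒮 R
  | comp {Ri Rj : Rule} {B' H' : Set Atom} {u : ℕ → Term} :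
      InClosure 𝒮 Ri → InClosure 𝒮 Rj →
      IsPieceUnifier Ri.body Rj B' H' u → InClosure 𝒮 (compose Ri Rj B' u)

def ruleSet (L : List Rule) : Set Rule := {R | R ∈ L}

/-- The stability property for a (possibly infinite) rule set. -/
def StableSet (𝒮 : Set Rule) : Prop :=
  ∀ R1 ∈ 𝒮, ∀ R2 ∈ 𝒮, ∀ B2' H1' u,
    IsPieceUnifier R2.body R1 B2' H1' u → StableUnifier R2 R1 B2' u

/-- `J` is a result of one breadth-first chase step of a (possibly infinite) rule set on `I`,
with fresh pairwise-compatible nulls (semi-oblivious naming). -/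
def OneStepResult (𝒮 : Set Rule) (I J : Set Atom) : Prop :=
  ∃ ν : Rule → (ℕ → Term) → ℕ → ℕ,
    (∀ R ∈ 𝒮, ∀ f x, Term.var (ν R f x) ∉ termsOf I) ∧
    (∀ R ∈ 𝒮, ∀ R' ∈ 𝒮, ∀ f f' x x', ν R f x = ν R' f' x' →
        R = R' ∧ restrict f R.frontier = restrict f' R'.frontier ∧ x = x') ∧
    J = I ∪ {a | ∃ R ∈ 𝒮, ∃ π : ℕ → Term, isHom π R.body I ∧
                  a ∈ substSet (safeSub ν R π) R.head}

/-- `I, R ⊨ q` for a Boolean conjunctive query `q` (a set of atoms). -/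
def Entails (L : List Rule) (I q : Set Atom) : Prop :=
  ∀ ν, SONaming L ν → ∃ k σ, isHom σ q (chaseF ν L I k)

/-- The null `t` occurs in at least `n` atoms of `S`. -/
def occursInAtLeast (S : Set Atom) (t : Term) (n : ℕ) : Prop :=
  ∃ F : Set Atom, F ⊆ {a | a ∈ S ∧ t ∈ a.terms} ∧ F.Finite ∧ n ≤ F.ncard

def FrontierGuarded (R : Rule) : Prop := ∃ a ∈ R.body, R.frontier ⊆ a.vars

def IsDatalog (R : Rule) : Prop := R.exist = ∅ ∧ ∃ a, R.head = {a}

end ER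
namespace ER
/-- `R1 : A(x) → ∃z p(x,z)` with A = pred 0, p = pred 2. -/
def R1ex : Rule := ⟨{⟨0, [Term.var 0]⟩}, {⟨2, [Term.var 0, Term.var 1]⟩}⟩
/-- `R2 : p(x,z) ∧ B(y) → r(z,y)` with B = pred 1, r = pred 3. -/
def R2ex : Rule := ⟨{⟨2, [Term.var 2, Term.var 3]⟩, ⟨1, [Term.var 4]⟩},
                   {⟨3, [Term.var 3, Term.var 4]⟩}⟩
def Lex : List Rule := [R1ex, R2ex]
/-- `I_n = {A(a), B(b₁), …, B(b_n)}`. -/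
def Iex (n : ℕ) : Set Atom :=
  {⟨0, [Term.const 0]⟩} ∪ {a | ∃ i < n, a = ⟨1, [Term.const (i + 1)]⟩}


/-! ### Auxiliary lemmas (added) -/

lemma mem_termsOf {S : Set Atom} {t : Term} : t ∈ termsOf S ↔ ∃ a ∈ S, t ∈ a.args := by
  simp [termsOf, Atom.terms]

lemma mem_varsOf {S : Set Atom} {v : ℕ} : v ∈ varsOf S ↔ ∃ a ∈ S, Term.var v ∈ a.args := by
  simp [varsOf, Atom.vars]

lemma restrict_restrict (f : ℕ → Term) (F : Set ℕ) :
    restrict (restrict f F) F = restrict f F := by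
  funext v; by_cases h : v ∈ F <;> simp [restrict, h]

def tInj : Term → ℕ
  | .const c => 2 * c
  | .var v => 2 * v + 1

lemma tInj_inj : Function.Injective tInj := by
  intro a b h
  cases a <;> cases b <;> simp only [tInj] at h
  · exact congrArg Term.const (by omega)
  · exact absurd h (by omega)
  · exact absurd h (by omega)
  · exact congrArg Term.var (by omega)

lemma atom_vars_finite (a : Atom) : a.vars.Finite := by
  have hsub : a.vars ⊆ Term.var ⁻¹' {t | t ∈ a.args} := fun v hv => hv
  refine Set.Finite.subset (Set.Finite.preimage ?_ (List.finite_toSet a.args)) hsub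
  exact Set.injOn_of_injective (fun x y h => by injection h)

lemma varsOf_finite {S : Set Atom} (h : S.Finite) : (varsOf S).Finite :=
  Set.Finite.biUnion h (fun a _ => atom_vars_finite a)

lemma frontier_finite {R : Rule} (h : WfRule R) : R.frontier.Finite :=
  Set.Finite.subset (varsOf_finite h.2.1) (fun _ hv => hv.2)

noncomputable def frCode (R : Rule) (f : ℕ → Term) : List ℕ :=
  if h : R.frontier.Finite then
    h.toFinset.toList.map (fun v => tInj (restrict f R.frontier v))
  else []

lemma frCode_congr {R : Rule} {f g : ℕ → Term}
    (h : restrict f R.frontier = restrict g R.frontier) : frCode R f = frCode R g := by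
  unfold frCode; rw [h]

lemma frCode_inj {R : Rule} (hfin : R.frontier.Finite) {f g : ℕ → Term}
    (h : frCode R f = frCode R g) : restrict f R.frontier = restrict g R.frontier := by
  unfold frCode at h
  rw [dif_pos hfin, dif_pos hfin, List.map_inj_left] at h
  funext v
  by_cases hv : v ∈ R.frontier
  · exact tInj_inj (h v (Finset.mem_toList.2 (hfin.mem_toFinset.2 hv)))
  · simp [restrict, hv]

lemma exists_soNaming (L : List Rule) (hL : WfList L) : ∃ ν, SONaming L ν := by
  obtain ⟨gR, hgR⟩ := Set.countable_iff_exists_injOn.1 (List.finite_toSet L).countable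
  refine ⟨fun R f x => Nat.pair (gR R)
    (Nat.pair (Encodable.encode (frCode R f)) x), ?_, ?_⟩
  · intro R _ f g h
    funext x
    dsimp only
    rw [frCode_congr h]
  · intro R hR R' hR' f f' x x' h
    rw [Nat.pair_eq_pair, Nat.pair_eq_pair] at h
    obtain ⟨h1, h2, h3⟩ := h
    have hRR : R = R' := hgR hR hR' h1
    subst hRR
    exact ⟨rfl, frCode_inj (frontier_finite (hL R hR)) (Encodable.encode_injective h2), h3⟩

lemma head_var_cases {R : Rule} {y : ℕ} (hy : y ∈ varsOf R.head) :
    y ∈ R.exist ∨ y ∈ R.frontier := by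
  by_cases h : y ∈ varsOf R.body
  · exact Or.inr ⟨h, hy⟩
  · exact Or.inl ⟨hy, h⟩

lemma hom_body_var {R : Rule} {π : ℕ → Term} {S : Set Atom} (h : isHom π R.body S)
    {y : ℕ} (hy : y ∈ varsOf R.body) : π y ∈ termsOf S := by
  obtain ⟨b, hb, hyb⟩ := mem_varsOf.1 hy
  have hmem : Atom.subst π b ∈ S := h ⟨b, hb, rfl⟩
  refine mem_termsOf.2 ⟨Atom.subst π b, hmem, ?_⟩
  simpa [Atom.subst, Term.subst] using List.mem_map_of_mem (f := Term.subst π) hyb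

lemma map_injOn_list {α β : Type*} {f : α → β} : ∀ {l1 l2 : List α},
    (∀ x ∈ l1, ∀ y ∈ l2, f x = f y → x = y) → l1.map f = l2.map f → l1 = l2 := by
  intro l1
  induction l1 with
  | nil => intro l2 _ h; cases l2 with
    | nil => rfl
    | cons b t => simp at h
  | cons a t ih =>
    intro l2 hinj h
    cases l2 with
    | nil => simp at h
    | cons b t2 =>
      simp only [List.map_cons, List.cons.injEq] at h
      have h1 := hinj a (by simp) b (by simp) h.1
      subst h1
      have h2 := ih (fun x hx y hy => hinj x (by simp [hx]) y (by simp [hy])) h.2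
      rw [h2]

lemma atom_subst_injOn {σ : ℕ → Term} {S : Set Atom}
    (hσ : Set.InjOn (Term.subst σ) (termsOf S)) :
    Set.InjOn (Atom.subst σ) S := by
  intro a ha b hb h
  simp only [Atom.subst, Atom.mk.injEq] at h
  obtain ⟨h1, h2⟩ := h
  have hargs : a.args = b.args := by
    refine map_injOn_list ?_ h2
    intro x hx y hy hxy
    exact hσ (mem_termsOf.2 ⟨a, ha, hx⟩) (mem_termsOf.2 ⟨b, hb, hy⟩) hxy
  cases a; cases b; simp_all

/-! ### The concrete example -/

lemma wfLex : WfList Lex := by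
  intro R hR
  have hR' : R = R1ex ∨ R = R2ex := by simpa [Lex] using hR
  rcases hR' with rfl | rfl
  · refine ⟨Set.finite_singleton _, Set.finite_singleton _, ⟨_, rfl⟩, ⟨_, rfl⟩, ?_⟩
    intro t ht
    obtain ⟨a, ha, hta⟩ := mem_termsOf.1 ht
    rcases ha with ha | ha <;>
      (rw [show a = _ from ha] at hta; simp [R1ex] at hta) <;>
      rcases hta with rfl | rfl <;> simp [Term.isConst]
  · refine ⟨(Set.finite_singleton _).insert _, Set.finite_singleton _,
      ⟨_, Set.mem_insert _ _⟩, ⟨_, rfl⟩, ?_⟩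
    intro t ht
    obtain ⟨a, ha, hta⟩ := mem_termsOf.1 ht
    rcases ha with (ha | ha) | ha <;>
      (rw [show a = _ from ha] at hta; simp [R2ex] at hta) <;>
      rcases hta with rfl | rfl <;> simp [Term.isConst]

lemma varsOf_R1body : varsOf R1ex.body = {0} := by
  ext v; simp [mem_varsOf, R1ex]

lemma varsOf_R1head : varsOf R1ex.head = {0, 1} := by
  ext v; simp [mem_varsOf, R1ex]

lemma varsOf_R2body : varsOf R2ex.body = {2, 3, 4} := by
  ext v
  simp only [mem_varsOf, R2ex, Set.mem_insert_iff, Set.mem_singleton_iff]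
  constructor
  · rintro ⟨a, (rfl | rfl), hv⟩ <;> simp_all <;> tauto
  · rintro (rfl | rfl | rfl)
    · exact ⟨_, Or.inl rfl, by simp⟩
    · exact ⟨_, Or.inl rfl, by simp⟩
    · exact ⟨_, Or.inr rfl, by simp⟩

lemma varsOf_R2head : varsOf R2ex.head = {3, 4} := by
  ext v; simp [mem_varsOf, R2ex]

lemma exist_R1ex : R1ex.exist = {1} := by
  rw [Rule.exist, varsOf_R1body, varsOf_R1head]
  ext v
  simp only [Set.mem_diff, Set.mem_insert_iff, Set.mem_singleton_iff]
  omega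

lemma frontier_R1ex : R1ex.frontier = {0} := by
  rw [Rule.frontier, varsOf_R1body, varsOf_R1head]
  ext v
  simp only [Set.mem_inter_iff, Set.mem_insert_iff, Set.mem_singleton_iff]
  omega

lemma exist_R2ex : R2ex.exist = ∅ := by
  rw [Rule.exist, varsOf_R2body, varsOf_R2head]
  rw [Set.diff_eq_empty]
  intro v hv
  simp only [Set.mem_insert_iff, Set.mem_singleton_iff] at hv ⊢
  omega

def tEx (ν : Rule → (ℕ → Term) → ℕ → ℕ) : Term := Term.var (ν R1ex (fun _ => Term.const 0) 1)
def pEx (ν : Rule → (ℕ → Term) → ℕ → ℕ) : Atom := ⟨2, [Term.const 0, tEx ν]⟩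
def rEx (ν : Rule → (ℕ → Term) → ℕ → ℕ) (i : ℕ) : Atom := ⟨3, [tEx ν, Term.const (i + 1)]⟩
def CEx (ν : Rule → (ℕ → Term) → ℕ → ℕ) (n : ℕ) : Set Atom :=
  (Iex n ∪ {pEx ν}) ∪ rEx ν '' Set.Iio n

lemma safeSub_R1 (ν : Rule → (ℕ → Term) → ℕ → ℕ) (π : ℕ → Term) (h0 : π 0 = Term.const 0) :
    Atom.subst (safeSub ν R1ex π) ⟨2, [Term.var 0, Term.var 1]⟩ = pEx ν := by
  have hr : restrict π R1ex.frontier = fun _ => Term.const 0 := by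
    funext v
    by_cases hv : v ∈ R1ex.frontier
    · have : v = 0 := by rw [frontier_R1ex] at hv; exact hv
      subst this; simp [restrict, hv, h0]
    · simp [restrict, hv]
  simp [Atom.subst, Term.subst, safeSub, pEx, tEx, exist_R1ex, hr, h0]

lemma safeSub_R2 (ν : Rule → (ℕ → Term) → ℕ → ℕ) (π : ℕ → Term) :
    Atom.subst (safeSub ν R2ex π) ⟨3, [Term.var 3, Term.var 4]⟩ = ⟨3, [π 3, π 4]⟩ := by
  simp [Atom.subst, Term.subst, safeSub, exist_R2ex]

lemma pred0_CEx {ν n t} (h : (⟨0, [t]⟩ : Atom) ∈ CEx ν n) : t = Term.const 0 := by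
  rcases h with (h | h) | h
  · rcases h with h | ⟨i, _, h⟩
    · rw [Set.mem_singleton_iff] at h
      simpa using h
    · simp at h
  · rw [Set.mem_singleton_iff] at h
    simp [pEx] at h
  · obtain ⟨i, _, h⟩ := h
    simp [rEx] at h

lemma pred1_CEx {ν n t} (h : (⟨1, [t]⟩ : Atom) ∈ CEx ν n) : ∃ i < n, t = Term.const (i + 1) := by
  rcases h with (h | h) | h
  · rcases h with h | ⟨i, hi, h⟩
    · rw [Set.mem_singleton_iff] at h; simp at h
    · refine ⟨i, hi, ?_⟩
      simpa using h
  · rw [Set.mem_singleton_iff] at h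
    simp [pEx] at h
  · obtain ⟨i, _, h⟩ := h
    simp [rEx] at h

lemma pred2_CEx {ν n t s} (h : (⟨2, [t, s]⟩ : Atom) ∈ CEx ν n) :
    t = Term.const 0 ∧ s = tEx ν := by
  rcases h with (h | h) | h
  · rcases h with h | ⟨i, _, h⟩
    · rw [Set.mem_singleton_iff] at h; simp at h
    · simp at h
  · rw [Set.mem_singleton_iff] at h
    simpa [pEx] using h
  · obtain ⟨i, _, h⟩ := h
    simp [rEx] at h

lemma chaseStep_CEx (ν : Rule → (ℕ → Term) → ℕ → ℕ) (n : ℕ) {S : Set Atom}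
    (hS : S ⊆ CEx ν n) : chaseStep ν Lex S ⊆ CEx ν n := by
  intro a ha
  rcases ha with ha | ⟨R, hR, π, hπ, haa⟩
  · exact hS ha
  · have hR' : R = R1ex ∨ R = R2ex := by simpa [Lex] using hR
    rcases hR' with rfl | rfl
    · obtain ⟨h, hh, rfl⟩ := haa
      have hh' : h = (⟨2, [Term.var 0, Term.var 1]⟩ : Atom) := hh
      subst hh'
      have hb : Atom.subst π ⟨0, [Term.var 0]⟩ ∈ S := hπ ⟨_, rfl, rfl⟩
      have hb' : (⟨0, [π 0]⟩ : Atom) ∈ CEx ν n := by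
        have : Atom.subst π ⟨0, [Term.var 0]⟩ = ⟨0, [π 0]⟩ := by simp [Atom.subst, Term.subst]
        exact this ▸ hS hb
      have h0 : π 0 = Term.const 0 := pred0_CEx hb'
      rw [safeSub_R1 ν π h0]
      exact Or.inl (Or.inr rfl)
    · obtain ⟨h, hh, rfl⟩ := haa
      have hh' : h = (⟨3, [Term.var 3, Term.var 4]⟩ : Atom) := hh
      subst hh'
      have hb1 : Atom.subst π ⟨2, [Term.var 2, Term.var 3]⟩ ∈ S := hπ ⟨_, Or.inl rfl, rfl⟩
      have hb2 : Atom.subst π ⟨1, [Term.var 4]⟩ ∈ S := hπ ⟨_, Or.inr rfl, rfl⟩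
      have hb1' : (⟨2, [π 2, π 3]⟩ : Atom) ∈ CEx ν n := by
        have : Atom.subst π ⟨2, [Term.var 2, Term.var 3]⟩ = ⟨2, [π 2, π 3]⟩ := by
          simp [Atom.subst, Term.subst]
        exact this ▸ hS hb1
      have hb2' : (⟨1, [π 4]⟩ : Atom) ∈ CEx ν n := by
        have : Atom.subst π ⟨1, [Term.var 4]⟩ = ⟨1, [π 4]⟩ := by simp [Atom.subst, Term.subst]
        exact this ▸ hS hb2
      obtain ⟨h2, h3⟩ := pred2_CEx hb1'
      obtain ⟨i, hi, h4⟩ := pred1_CEx hb2'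
      rw [safeSub_R2 ν π, h3, h4]
      exact Or.inr ⟨i, hi, rfl⟩

lemma chaseF_subset_CEx (ν : Rule → (ℕ → Term) → ℕ → ℕ) (n k : ℕ) :
    chaseF ν Lex (Iex n) k ⊆ CEx ν n := by
  induction k with
  | zero => exact fun a ha => Or.inl (Or.inl ha)
  | succ k ih => exact chaseStep_CEx ν n ih

lemma pEx_mem_chase1 (ν : Rule → (ℕ → Term) → ℕ → ℕ) (n : ℕ) :
    pEx ν ∈ chaseF ν Lex (Iex n) 1 := by
  refine Or.inr ⟨R1ex, by simp [Lex], fun _ => Term.const 0, ?_, ?_⟩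
  · rintro x ⟨b, hb, rfl⟩
    have hb' : b = (⟨0, [Term.var 0]⟩ : Atom) := hb
    subst hb'
    have : Atom.subst (fun _ => Term.const 0) ⟨0, [Term.var 0]⟩ = ⟨0, [Term.const 0]⟩ := by
      simp [Atom.subst, Term.subst]
    rw [this]
    exact Or.inl rfl
  · exact ⟨⟨2, [Term.var 0, Term.var 1]⟩, rfl, safeSub_R1 ν _ rfl⟩

def πEx (ν : Rule → (ℕ → Term) → ℕ → ℕ) (i : ℕ) : ℕ → Term :=
  fun v => if v = 3 then tEx ν else if v = 4 then Term.const (i + 1) else Term.const 0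

lemma rEx_mem_chase2 (ν : Rule → (ℕ → Term) → ℕ → ℕ) (n i : ℕ) (hi : i < n) :
    rEx ν i ∈ chaseF ν Lex (Iex n) 2 := by
  refine Or.inr ⟨R2ex, by simp [Lex], πEx ν i, ?_, ?_⟩
  · rintro x ⟨b, hb, rfl⟩
    rcases hb with hb | hb
    · have hb' : b = (⟨2, [Term.var 2, Term.var 3]⟩ : Atom) := hb
      subst hb'
      have heq : Atom.subst (πEx ν i) ⟨2, [Term.var 2, Term.var 3]⟩ = pEx ν := by
        simp [Atom.subst, Term.subst, pEx, πEx]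
      rw [heq]
      exact pEx_mem_chase1 ν n
    · have hb' : b = (⟨1, [Term.var 4]⟩ : Atom) := hb
      subst hb'
      have heq : Atom.subst (πEx ν i) ⟨1, [Term.var 4]⟩ = ⟨1, [Term.const (i + 1)]⟩ := by
        simp [Atom.subst, Term.subst, πEx]
      rw [heq]
      exact Or.inl (Or.inr ⟨i, hi, rfl⟩)
  · refine ⟨⟨3, [Term.var 3, Term.var 4]⟩, rfl, ?_⟩
    rw [safeSub_R2]
    simp [rEx, πEx]

lemma chaseInf_eq_CEx (ν : Rule → (ℕ → Term) → ℕ → ℕ) (n : ℕ) :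
    chaseInf ν Lex (Iex n) = CEx ν n := by
  apply Set.Subset.antisymm
  · intro a ha
    obtain ⟨_, ⟨k, rfl⟩, ha⟩ := ha
    exact chaseF_subset_CEx ν n k ha
  · intro a ha
    rcases ha with (ha | ha) | ha
    · exact Set.mem_iUnion.2 ⟨0, ha⟩
    · rw [Set.mem_singleton_iff] at ha
      exact Set.mem_iUnion.2 ⟨1, ha ▸ pEx_mem_chase1 ν n⟩
    · obtain ⟨i, hi, rfl⟩ := ha
      exact Set.mem_iUnion.2 ⟨2, rEx_mem_chase2 ν n i hi⟩

lemma FEx_sub (ν : Rule → (ℕ → Term) → ℕ → ℕ) (n : ℕ) :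
    insert (pEx ν) (rEx ν '' Set.Iio n) ⊆
      {a | a ∈ chaseInf ν Lex (Iex n) ∧ tEx ν ∈ a.terms} := by
  intro a ha
  rw [chaseInf_eq_CEx]
  rcases ha with rfl | ⟨i, hi, rfl⟩
  · exact ⟨Or.inl (Or.inr rfl), by simp [pEx, Atom.terms]⟩
  · exact ⟨Or.inr ⟨i, hi, rfl⟩, by simp [rEx, Atom.terms]⟩

lemma rEx_injOn (ν : Rule → (ℕ → Term) → ℕ → ℕ) : Function.Injective (rEx ν) := by
  intro i j h
  simp only [rEx, Atom.mk.injEq, List.cons.injEq, true_and, and_true] at h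
  injection h with h'
  omega

lemma FEx_ncard (ν : Rule → (ℕ → Term) → ℕ → ℕ) (n : ℕ) :
    (insert (pEx ν) (rEx ν '' Set.Iio n)).ncard = n + 1 := by
  have himg : (rEx ν '' Set.Iio n).ncard = n := by
    rw [Set.ncard_image_of_injOn (Set.injOn_of_injective (rEx_injOn ν)),
      ← Finset.coe_range, Set.ncard_coe_finset, Finset.card_range]
  rw [Set.ncard_insert_of_notMem ?h ((Set.finite_Iio n).image _), himg]
  rintro ⟨i, _, h⟩
  simp [rEx, pEx] at h

lemma isInstance_Iex (n : ℕ) : IsInstance (Iex n) := by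
  constructor
  · have : Iex n = {(⟨0, [Term.const 0]⟩ : Atom)} ∪
        (fun i => (⟨1, [Term.const (i + 1)]⟩ : Atom)) '' Set.Iio n := by
      ext a
      simp only [Iex, Set.mem_union, Set.mem_singleton_iff, Set.mem_setOf_eq, Set.mem_image,
        Set.mem_Iio]
      constructor
      · rintro (rfl | ⟨i, hi, rfl⟩)
        · exact Or.inl rfl
        · exact Or.inr ⟨i, hi, rfl⟩
      · rintro (rfl | ⟨i, hi, rfl⟩)
        · exact Or.inl rfl
        · exact Or.inr ⟨i, hi, rfl⟩
    rw [this]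
    exact (Set.finite_singleton _).union ((Set.finite_Iio n).image _)
  · intro t ht
    obtain ⟨a, ha, hta⟩ := mem_termsOf.1 ht
    rcases ha with ha | ⟨i, _, rfl⟩
    · rw [Set.mem_singleton_iff] at ha
      subst ha
      simp only [List.mem_cons, List.not_mem_nil, or_false] at hta
      subst hta; trivial
    · simp only [List.mem_cons, List.not_mem_nil, or_false] at hta
      subst hta; trivial

lemma occ_analysis {L' : List Rule} {ν' : Rule → (ℕ → Term) → ℕ → ℕ} {I : Set Atom}
    (hI : ∀ t ∈ termsOf I, t.isConst)
    {a : Atom} (ha : a ∈ chaseStep ν' L' I) {m : ℕ} (hm : Term.var m ∈ a.terms) :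
    ∃ R ∈ L', ∃ π, isHom π R.body I ∧ a ∈ substSet (safeSub ν' R π) R.head ∧
      ∃ y ∈ R.exist, m = ν' R (restrict π R.frontier) y := by
  rcases ha with ha | ⟨R, hR, π, hπ, hprod⟩
  · exact absurd (hI _ (mem_termsOf.2 ⟨a, ha, hm⟩)) (fun h => h)
  · refine ⟨R, hR, π, hπ, hprod, ?_⟩
    obtain ⟨h, hh, rfl⟩ := hprod
    obtain ⟨u, hu, hum⟩ : ∃ u ∈ h.args, Term.subst (safeSub ν' R π) u = Term.var m := by
      simpa [Atom.subst, Atom.terms] using hm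
    cases u with
    | const c => simp [Term.subst] at hum
    | var y =>
      have hy : y ∈ varsOf R.head := mem_varsOf.2 ⟨h, hh, hu⟩
      by_cases hex : y ∈ R.exist
      · refine ⟨y, hex, ?_⟩
        have h1 : safeSub ν' R π y = Term.var m := hum
        rw [safeSub, if_pos hex] at h1
        injection h1 with h2
        omega
      · exfalso
        have hyb : y ∈ varsOf R.body := by
          by_contra hb; exact hex ⟨hy, hb⟩
        have hc := hI _ (hom_body_var hπ hyb)
        have h1 : safeSub ν' R π y = Term.var m := hum
        rw [safeSub, if_neg hex] at h1
        rw [h1] at hc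
        exact hc

lemma loc_analysis {L' : List Rule} {ν' : Rule → (ℕ → Term) → ℕ → ℕ} (hν' : SONaming L' ν')
    {I : Set Atom} {m : ℕ} {R₀ : Rule} (hR₀ : R₀ ∈ L') {π₀ : ℕ → Term}
    (hy₀ : ∃ y ∈ R₀.exist, m = ν' R₀ (restrict π₀ R₀.frontier) y)
    {a : Atom} (haR : ∃ R ∈ L', ∃ π, isHom π R.body I ∧ a ∈ substSet (safeSub ν' R π) R.head ∧
      ∃ y ∈ R.exist, m = ν' R (restrict π R.frontier) y) :
    a ∈ substSet (safeSub ν' R₀ π₀) R₀.head := by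
  obtain ⟨R, hR, π, hπ, ⟨h, hh, rfl⟩, y, hy, hm⟩ := haR
  obtain ⟨y₀, hy₀e, hm₀⟩ := hy₀
  obtain ⟨hRR, hres, hyy⟩ := hν'.2 R hR R₀ hR₀ _ _ y y₀ (hm.symm.trans hm₀)
  subst hRR
  rw [restrict_restrict, restrict_restrict] at hres
  refine ⟨h, hh, ?_⟩
  show Atom.subst (safeSub ν' R π₀) h = Atom.subst (safeSub ν' R π) h
  simp only [Atom.subst, Atom.mk.injEq, true_and]
  rw [List.map_inj_left]
  intro u hu
  cases u with
  | const c => rfl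
  | var z =>
    have hz : z ∈ varsOf R.head := mem_varsOf.2 ⟨h, hh, hu⟩
    show safeSub ν' R π₀ z = safeSub ν' R π z
    by_cases hex : z ∈ R.exist
    · simp [safeSub, hex, hres]
    · have hzf : z ∈ R.frontier := (head_var_cases hz).resolve_left hex
      simp only [safeSub, if_neg hex]
      have h1 : restrict π R.frontier z = restrict π₀ R.frontier z := by rw [hres]
      simpa [restrict, hzf] using h1.symm

/-- the prime example is not parallelisable: for each `n`, the chase of `I_n`
contains a null occurring in `n+1` atoms. -/
theorem prime_example_not_parallelisable :
    (∀ ν, SONaming Lex ν → ∀ n : ℕ,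
      ∃ t, t ∈ nullsOf (chaseInf ν Lex (Iex n)) ∧
        occursInAtLeast (chaseInf ν Lex (Iex n)) t (n + 1)) ∧
    ¬ Parallelisable Lex := by
  constructor
  · intro ν _ n
    refine ⟨tEx ν, ⟨?_, fun h => h⟩, ?_⟩
    · refine mem_termsOf.2 ⟨pEx ν, ?_, by simp [pEx]⟩
      rw [chaseInf_eq_CEx]
      exact Or.inl (Or.inr rfl)
    · exact ⟨insert (pEx ν) (rEx ν '' Set.Iio n), FEx_sub ν n,
        ((Set.finite_Iio n).image _).insert _, by rw [FEx_ncard]⟩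
  · rintro ⟨L', hwf, hpar⟩
    obtain ⟨ν, hν⟩ := exists_soNaming Lex wfLex
    obtain ⟨ν', hν'⟩ := exists_soNaming L' hwf
    set M := (L'.map (fun R => R.head.ncard)).sum with hM
    obtain ⟨⟨σ, hσh, hσi⟩, σ', hσ'⟩ := hpar ν ν' hν hν' (Iex M) (isInstance_Iex M)
    have hpC : pEx ν ∈ chaseInf ν Lex (Iex M) := by
      rw [chaseInf_eq_CEx]; exact Or.inl (Or.inr rfl)
    have hpm : Atom.subst σ (pEx ν) ∈ chaseF ν' L' (Iex M) 1 := hσh ⟨pEx ν, hpC, rfl⟩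
    obtain ⟨m, hsm⟩ : ∃ m, Term.subst σ (tEx ν) = Term.var m := by
      cases hs : Term.subst σ (tEx ν) with
      | var m => exact ⟨m, rfl⟩
      | const c =>
        exfalso
        have h1 : Atom.subst σ (pEx ν) = ⟨2, [Term.const 0, Term.const c]⟩ := by
          show (⟨2, [Term.subst σ (Term.const 0), Term.subst σ (tEx ν)]⟩ : Atom) = _
          rw [hs]
          rfl
        have h2 : Atom.subst σ' (⟨2, [Term.const 0, Term.const c]⟩ : Atom)
            ∈ chaseInf ν Lex (Iex M) := hσ' ⟨_, h1 ▸ hpm, rfl⟩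
        have h3 : Atom.subst σ' (⟨2, [Term.const 0, Term.const c]⟩ : Atom)
            = ⟨2, [Term.const 0, Term.const c]⟩ := by simp [Atom.subst, Term.subst]
        rw [h3, chaseInf_eq_CEx] at h2
        have h4 := (pred2_CEx h2).2
        simp [tEx] at h4
    have hIg := (isInstance_Iex M).2
    have hJ1 : chaseF ν' L' (Iex M) 1 = chaseStep ν' L' (Iex M) := rfl
    have hterm0 : Term.var m ∈ (Atom.subst σ (pEx ν)).terms := by
      show Term.var m ∈ [Term.subst σ (Term.const 0), Term.subst σ (tEx ν)]
      rw [hsm]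
      simp
    obtain ⟨R₀, hR₀, π₀, hπ₀, hmem₀, hy₀⟩ := occ_analysis hIg (hJ1 ▸ hpm) hterm0
    set F := insert (pEx ν) (rEx ν '' Set.Iio M) with hF
    have hFC : F ⊆ chaseInf ν Lex (Iex M) := fun a ha => (FEx_sub ν M ha).1
    have hG : Atom.subst σ '' F ⊆ substSet (safeSub ν' R₀ π₀) R₀.head := by
      rintro _ ⟨a, ha, rfl⟩
      have haJ : Atom.subst σ a ∈ chaseStep ν' L' (Iex M) := hJ1 ▸ hσh ⟨a, hFC ha, rfl⟩
      have hterm : Term.var m ∈ (Atom.subst σ a).terms := by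
        have h5 : tEx ν ∈ a.args := by
          rcases ha with rfl | ⟨i, _, rfl⟩ <;> simp [pEx, rEx]
        have h6 := List.mem_map_of_mem (f := Term.subst σ) h5
        rw [hsm] at h6
        exact h6
      exact loc_analysis hν' hR₀ hy₀ (occ_analysis hIg haJ hterm)
    have hhead : R₀.head.Finite := (hwf R₀ hR₀).2.1
    have hcard1 : (Atom.subst σ '' F).ncard = M + 1 := by
      rw [Set.ncard_image_of_injOn ((atom_subst_injOn hσi).mono hFC), hF, FEx_ncard]
    have hle : (Atom.subst σ '' F).ncard ≤ R₀.head.ncard :=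
      le_trans (Set.ncard_le_ncard hG (hhead.image _)) (Set.ncard_image_le hhead)
    have hM' : R₀.head.ncard ≤ M :=
      List.single_le_sum (fun x _ => Nat.zero_le x) _ (List.mem_map_of_mem (f := fun R => R.head.ncard) hR₀)
    omega
end ER
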